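/- Let d ≥ 2, let k be an integer with 1 ≤ k ≤ d−1, and let β ∈ [k/d, 1]. Set t := 1/k − (1/(k·d))·(√((1−β)·k) − √(β·(d−k)))², and define λ : Fin d → ℝ by λᵢ = t for i < k and λᵢ = (1−k·t)/(d−k) for i ≥ k. Then 0 ≤ (1−k·t)/(d−k) ≤ t (so λ is a decreasing probability vector) and Σᵢ √λᵢ = √(d·β). Consequently 1 − Σ_{i<k} λᵢ = (1/d)·(√((1−β)·k) − √(β·(d−k)))², so the bound on the k-th Vidal monotone among Schmidt vectors with Σᵢ √λᵢ = √(dβ) is attained. -/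

import Mathlib

open scoped BigOperators

set_option maxHeartbeats 1000000 in
/-- The bound on the `k`-th Vidal monotone among Schmidt vectors with overlap `β` is
attained by the vector with `k` entries equal to `t` and `d−k` entries equal to
`(1−kt)/(d−k)`, where `t = 1/k − (1/(kd))(√((1−β)k) − √(β(d−k)))²`. -/
theorem vidal_monotone_bound_attained (d k : ℕ) (hd : 2 ≤ d)
    (hk1 : 1 ≤ k) (hk2 : k ≤ d - 1)
    (β : ℝ) (hβ1 : (k : ℝ) / d ≤ β) (hβ2 : β ≤ 1)
    (t : ℝ)
    (ht : t = 1 / (k : ℝ) - (1 / ((k : ℝ) * d)) *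
      (Real.sqrt ((1 - β) * k) - Real.sqrt (β * ((d : ℝ) - k))) ^ 2)
    (lam : Fin d → ℝ)
    (hlamdef : ∀ i : Fin d, lam i =
      if (i : ℕ) < k then t else (1 - k * t) / ((d : ℝ) - k)) :
    (0 ≤ (1 - k * t) / ((d : ℝ) - k) ∧ (1 - k * t) / ((d : ℝ) - k) ≤ t) ∧
    (∑ i, Real.sqrt (lam i) = Real.sqrt (d * β)) ∧
    1 - ∑ i ∈ Finset.univ.filter (fun i : Fin d => (i : ℕ) < k), lam i =
      (1 / (d : ℝ)) *
        (Real.sqrt ((1 - β) * k) - Real.sqrt (β * ((d : ℝ) - k))) ^ 2 := by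
  have hkd : k < d := by omega
  have hk0 : (0:ℝ) < k := by exact_mod_cast hk1
  have hd0 : (0:ℝ) < d := by positivity
  have hdk : (0:ℝ) < (d:ℝ) - k := by
    have : (k:ℝ) < d := by exact_mod_cast hkd
    linarith
  have hβ0 : 0 ≤ β := le_trans (by positivity) hβ1
  have h1β : 0 ≤ 1 - β := by linarith
  have hkβd : (k:ℝ) ≤ β * d := by
    have := (div_le_iff₀ hd0).mp hβ1; linarith
  set A := Real.sqrt ((1 - β) * k) with hA
  set B := Real.sqrt (β * ((d:ℝ) - k)) with hB
  set C := Real.sqrt ((1 - β) * ((d:ℝ) - k)) with hC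
  set D := Real.sqrt (β * (k:ℝ)) with hD
  have hA0 : 0 ≤ A := Real.sqrt_nonneg _
  have hB0 : 0 ≤ B := Real.sqrt_nonneg _
  have hC0 : 0 ≤ C := Real.sqrt_nonneg _
  have hD0 : 0 ≤ D := Real.sqrt_nonneg _
  have hA2 : A ^ 2 = (1 - β) * k := Real.sq_sqrt (by positivity)
  have hB2 : B ^ 2 = β * ((d:ℝ) - k) := Real.sq_sqrt (by positivity)
  have hC2 : C ^ 2 = (1 - β) * ((d:ℝ) - k) := Real.sq_sqrt (by positivity)
  have hD2 : D ^ 2 = β * (k:ℝ) := Real.sq_sqrt (by positivity)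
  have hABCD : A * B = C * D := by
    rw [hA, hB, hC, hD, ← Real.sqrt_mul (by positivity), ← Real.sqrt_mul (by positivity)]
    ring_nf
  have hAleB : A ≤ B := Real.sqrt_le_sqrt (by nlinarith)
  have key : (A - B) ^ 2 + (C + D) ^ 2 = (d:ℝ) := by
    linear_combination hA2 + hB2 + hC2 + hD2 - 2 * hABCD
  have ht3 : t = ((d:ℝ) - (A - B) ^ 2) / ((k:ℝ) * d) := by
    rw [ht]; field_simp
  have hs3 : (1 - k * t) / ((d:ℝ) - k) = (A - B) ^ 2 / ((d:ℝ) * ((d:ℝ) - k)) := by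
    rw [ht3]; field_simp; ring
  have hP2 : (A - B) ^ 2 ≤ (d:ℝ) - k := by
    nlinarith [mul_le_mul_of_nonneg_left hAleB hA0, mul_nonneg hA0 hB0, hB2]
  -- square roots of the two values
  have hkd2 : Real.sqrt ((k:ℝ) * d) ^ 2 = (k:ℝ) * d := Real.sq_sqrt (by positivity)
  have hddk2 : Real.sqrt ((d:ℝ) * ((d:ℝ) - k)) ^ 2 = (d:ℝ) * ((d:ℝ) - k) :=
    Real.sq_sqrt (by positivity)
  have ht2 : t = ((C + D) / Real.sqrt ((k:ℝ) * d)) ^ 2 := by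
    rw [ht3, div_pow, hkd2, show (d:ℝ) - (A - B) ^ 2 = (C + D) ^ 2 by linarith]
  have hs2 : (1 - k * t) / ((d:ℝ) - k) = ((B - A) / Real.sqrt ((d:ℝ) * ((d:ℝ) - k))) ^ 2 := by
    rw [hs3, div_pow, hddk2]; ring_nf
  have sqrt_t : Real.sqrt t = (C + D) / Real.sqrt ((k:ℝ) * d) := by
    rw [ht2]; exact Real.sqrt_sq (div_nonneg (add_nonneg hC0 hD0) (Real.sqrt_nonneg _))
  have sqrt_s : Real.sqrt ((1 - k * t) / ((d:ℝ) - k)) =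
      (B - A) / Real.sqrt ((d:ℝ) * ((d:ℝ) - k)) := by
    rw [hs2]; exact Real.sqrt_sq (div_nonneg (sub_nonneg.2 hAleB) (Real.sqrt_nonneg _))
  -- cardinalities
  have hcard : (Finset.univ.filter fun i : Fin d => (i : ℕ) < k).card = k := by
    have : (Finset.univ.filter fun i : Fin d => (i : ℕ) < k) = Finset.Iio ⟨k, hkd⟩ := by
      ext i; simp [Fin.lt_def]
    rw [this, Fin.card_Iio]
  have hcard' : (Finset.univ.filter fun i : Fin d => ¬ (i : ℕ) < k).card = d - k := by
    have h := Finset.card_filter_add_card_filter_not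
      (s := (Finset.univ : Finset (Fin d))) (p := fun i : Fin d => (i : ℕ) < k)
    simp only [Finset.card_univ, Fintype.card_fin, hcard] at h
    omega
  refine ⟨⟨by rw [hs3]; positivity, ?_⟩, ?_, ?_⟩
  · rw [hs3, ht3, div_le_div_iff₀ (by positivity) (by positivity)]
    nlinarith [sq_nonneg (A - B), mul_le_mul_of_nonneg_left hP2 hd0.le]
  · have hsplit : ∑ i, Real.sqrt (lam i) =
        (k:ℝ) * Real.sqrt t + ((d:ℝ) - k) * Real.sqrt ((1 - k * t) / ((d:ℝ) - k)) := by
      calc ∑ i, Real.sqrt (lam i)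
          = ∑ i : Fin d, (if (i : ℕ) < k then Real.sqrt t
              else Real.sqrt ((1 - k * t) / ((d:ℝ) - k))) := by
            refine Finset.sum_congr rfl fun i _ => ?_
            rw [hlamdef i]; split_ifs <;> rfl
        _ = _ := by
            rw [Finset.sum_ite, Finset.sum_const, Finset.sum_const, hcard, hcard',
              nsmul_eq_mul, nsmul_eq_mul, Nat.cast_sub hkd.le]
    rw [hsplit, sqrt_t, sqrt_s,
      Real.sqrt_mul hk0.le (d:ℝ), Real.sqrt_mul hd0.le ((d:ℝ) - k),
      Real.sqrt_mul hd0.le β]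
    have e1 : A = Real.sqrt (1 - β) * Real.sqrt k := by rw [hA, Real.sqrt_mul h1β]
    have e2 : B = Real.sqrt β * Real.sqrt ((d:ℝ) - k) := by rw [hB, Real.sqrt_mul hβ0]
    have e3 : C = Real.sqrt (1 - β) * Real.sqrt ((d:ℝ) - k) := by rw [hC, Real.sqrt_mul h1β]
    have e4 : D = Real.sqrt β * Real.sqrt k := by rw [hD, Real.sqrt_mul hβ0]
    have hu2 : Real.sqrt (k:ℝ) ^ 2 = (k:ℝ) := Real.sq_sqrt hk0.le
    have hv2 : Real.sqrt ((d:ℝ) - k) ^ 2 = (d:ℝ) - k := Real.sq_sqrt hdk.le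
    have hw2 : Real.sqrt (d:ℝ) ^ 2 = (d:ℝ) := Real.sq_sqrt hd0.le
    have hu0 : (0:ℝ) < Real.sqrt k := Real.sqrt_pos.2 hk0
    have hv0 : (0:ℝ) < Real.sqrt ((d:ℝ) - k) := Real.sqrt_pos.2 hdk
    have hw0 : (0:ℝ) < Real.sqrt d := Real.sqrt_pos.2 hd0
    rw [e1, e2, e3, e4]
    field_simp
    linear_combination ((k:ℝ) * Real.sqrt (1 - β)) * hv2
      - (((d:ℝ) - (k:ℝ)) * Real.sqrt (1 - β)) * hu2
      - (Real.sqrt β * Real.sqrt (k:ℝ) * Real.sqrt ((d:ℝ) - (k:ℝ))) * hw2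
  · have hfsum : ∑ i ∈ Finset.univ.filter (fun i : Fin d => (i : ℕ) < k), lam i
        = (k:ℝ) * t := by
      rw [Finset.sum_congr rfl (fun i hi => by
        rw [hlamdef i, if_pos (Finset.mem_filter.mp hi).2]),
        Finset.sum_const, hcard, nsmul_eq_mul]
    rw [hfsum, ht3]
    field_simp
    ring
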